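/- Let C(X) ∈ ℚ⟦X⟦ be the generating function of the Catalan numbers, i.e. the formal power series with constant term 1 satisfying C = 1 + X·C². Then C also satisfies the cubic functional equation (1 − X)·C = 1 + X²·C³. Consequently, the unique formal power series G with constant term 1 satisfying (1 − X)·G = 1 + X²·G³ equals C. -/

import Mathlib

open PowerSeries

/-- The Catalan generating function `C`, i.e. the formal power series over `ℚ` with
constant term `1` satisfying `C = 1 + X·C²`, also satisfies the cubic equation
`(1 − X)·C = 1 + X²·C³`; moreover any power series `G` with constant term `1`
satisfying `(1 − X)·G = 1 + X²·G³` equals `C`. -/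
theorem catalan_gf_cubic_equation (C : PowerSeries ℚ)
    (hC0 : PowerSeries.constantCoeff C = 1)
    (hC : C = 1 + PowerSeries.X * C ^ 2) :
    (1 - PowerSeries.X) * C = 1 + PowerSeries.X ^ 2 * C ^ 3 ∧
      ∀ G : PowerSeries ℚ, PowerSeries.constantCoeff G = 1 →
        (1 - PowerSeries.X) * G = 1 + PowerSeries.X ^ 2 * G ^ 3 → G = C := by
  have hcubic : (1 - PowerSeries.X) * C = 1 + PowerSeries.X ^ 2 * C ^ 3 := by
    linear_combination (1 + PowerSeries.X * C) * hC
  refine ⟨hcubic, fun G hG0 hG => ?_⟩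
  have key : (G - C) * ((1 - PowerSeries.X) -
      PowerSeries.X ^ 2 * (G ^ 2 + G * C + C ^ 2)) = 0 := by
    linear_combination hG - hcubic
  rcases mul_eq_zero.mp key with h | h
  · exact sub_eq_zero.mp h
  · exfalso
    have := congrArg PowerSeries.constantCoeff h
    simp at this
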